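/- Let μ be a regular uncountable cardinal, γ an ordinal, S ⊆ μ stationary, and f : S → γ strictly increasing. Then there is a club C ⊆ μ and a strictly increasing total function f* : μ → γ such that f* agrees with f on S ∩ C. -/

import Mathlib

/-- `o` is an accumulation point of `C`. -/
def IsAcc (o : Ordinal) (C : Set Ordinal) : Prop :=
  o ≠ 0 ∧ ∀ b < o, ∃ c ∈ C, b < c ∧ c < o

/-- `C` is closed and unbounded (a club) in `μ`. -/
def IsClubIn (C : Set Ordinal) (μ : Ordinal) : Prop :=
  (∀ o < μ, IsAcc o C → o ∈ C) ∧ ∀ b < μ, ∃ c ∈ C, b < c ∧ c < μ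

/-- `S` is a stationary subset of `μ`. -/
def IsStationaryIn (S : Set Ordinal) (μ : Ordinal) : Prop :=
  S ⊆ Set.Iio μ ∧ ∀ C : Set Ordinal, IsClubIn C μ → (S ∩ C).Nonempty

universe u

/-- Single-universe version of the interpolation theorem. -/
theorem stmt7core (μ : Cardinal.{u}) (hreg : μ.IsRegular) (hunc : Cardinal.aleph0 < μ)
    (γ : Ordinal.{u}) (S : Set Ordinal.{u}) (hS : IsStationaryIn S μ.ord)
    (f : Ordinal.{u} → Ordinal.{u})
    (hrange : ∀ α ∈ S, f α < γ)
    (hmono : ∀ α ∈ S, ∀ β ∈ S, α < β → f α < f β) :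
    ∃ C : Set Ordinal.{u}, IsClubIn C μ.ord ∧
      ∃ g : Ordinal.{u} → Ordinal.{u},
        (∀ α < μ.ord, g α < γ) ∧
        (∀ α β : Ordinal.{u}, α < β → β < μ.ord → g α < g β) ∧
        ∀ α ∈ S ∩ C, g α = f α := by
  classical
  have hμlim : Order.IsSuccLimit μ.ord := Cardinal.isSuccLimit_ord hunc.le
  have hμ0 : (0 : Ordinal.{u}) < μ.ord := hμlim.pos
  have hSsub : S ⊆ Set.Iio μ.ord := hS.1
  have finj : ∀ a ∈ S, ∀ b ∈ S, f a = f b → a = b := by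
    intro a ha b hb h
    rcases lt_trichotomy a b with h' | h' | h'
    · exact absurd h (ne_of_lt (hmono a ha b hb h'))
    · exact h'
    · exact absurd h.symm (ne_of_lt (hmono b hb a ha h'))
  -- the partial inverse
  set φ : Ordinal.{u} → Ordinal.{u} → Ordinal.{u} := fun β ξ =>
    if h : ∃ δ ∈ S, f δ = f β + ξ then h.choose else 0 with hφdef
  have hφ : ∀ β ξ δ, δ ∈ S → f δ = f β + ξ → φ β ξ = δ := by
    intro β ξ δ hδ he
    have hex : ∃ δ ∈ S, f δ = f β + ξ := ⟨δ, hδ, he⟩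
    simp only [hφdef, dif_pos hex]
    exact finj _ hex.choose_spec.1 δ hδ (hex.choose_spec.2.trans he.symm)
  have hφlt : ∀ β ξ, φ β ξ < μ.ord := by
    intro β ξ
    simp only [hφdef]
    split
    · next h => exact hSsub h.choose_spec.1
    · exact hμ0
  -- the first club
  set C₀ : Set Ordinal.{u} :=
    {α | ∀ β ∈ S, β < α → ∀ ξ < α, ∀ δ ∈ S, f δ = f β + ξ → δ < α} with hC₀def
  have c0closed : ∀ o : Ordinal.{u}, IsAcc o C₀ → o ∈ C₀ := by
    intro o ⟨_, hacc⟩ β hβ hβo ξ hξo δ hδ he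
    obtain ⟨c, hc, h1, h2⟩ := hacc (max β ξ) (max_lt hβo hξo)
    exact (hc β hβ ((le_max_left β ξ).trans_lt h1) ξ ((le_max_right β ξ).trans_lt h1)
      δ hδ he).trans h2
  have hT : ∀ α ∈ S, α ∈ C₀ → ∀ β ∈ S, β < α → f β + α ≤ f α := by
    intro α hα hαC β hβ hβα
    by_contra hcon
    push_neg at hcon
    have hle : f β ≤ f α := (hmono β hβ α hα hβα).le
    have he : f β + (f α - f β) = f α := Ordinal.add_sub_cancel_of_le hle
    have hξ : f α - f β < α := by
      have h' : f β + (f α - f β) < f β + α := by rw [he]; exact hcon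
      exact (add_lt_add_iff_left (f β)).mp h'
    exact absurd (hαC β hβ hβα _ hξ α hα he.symm) (lt_irrefl α)
  -- closure function for unboundedness of C₀
  set next : Ordinal.{u} → Ordinal.{u} := fun x =>
    max (x + 1) (Ordinal.bsup.{u, u} x (fun β _ => Ordinal.bsup.{u, u} x (fun ξ _ => φ β ξ + 1)))
    with hnextdef
  have hnextlt : ∀ x < μ.ord, next x < μ.ord := by
    intro x hx
    apply max_lt
    · rw [Ordinal.add_one_eq_succ]; exact hμlim.succ_lt hx
    · apply Ordinal.bsup_lt_ord
      · rw [hreg.cof_eq]; exact Cardinal.lt_ord.mp hx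
      · intro β hβ
        apply Ordinal.bsup_lt_ord
        · rw [hreg.cof_eq]; exact Cardinal.lt_ord.mp hx
        · intro ξ hξ
          rw [Ordinal.add_one_eq_succ]; exact hμlim.succ_lt (hφlt β ξ)
  have hnextgt : ∀ x, x < next x := fun x =>
    lt_of_lt_of_le (lt_add_one x) (le_max_left _ _)
  have hnextφ : ∀ x, ∀ β < x, ∀ ξ < x, φ β ξ < next x := by
    intro x β hβ ξ hξ
    have h1 : φ β ξ + 1 ≤ Ordinal.bsup.{u, u} x (fun ξ _ => φ β ξ + 1) :=
      Ordinal.le_bsup _ ξ hξ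
    have h2 : Ordinal.bsup.{u, u} x (fun ξ _ => φ β ξ + 1) ≤
        Ordinal.bsup.{u, u} x (fun β _ => Ordinal.bsup.{u, u} x (fun ξ _ => φ β ξ + 1)) :=
      Ordinal.le_bsup _ β hβ
    calc φ β ξ < φ β ξ + 1 := lt_add_one _
      _ ≤ _ := h1.trans (h2.trans (le_max_right _ _))
  have c0unb : ∀ b < μ.ord, ∃ c ∈ C₀, b < c ∧ c < μ.ord := by
    intro b hb
    set a : ℕ → Ordinal.{u} := fun n => next^[n] (b + 1) with hadef
    have hsucc : ∀ n, a (n + 1) = next (a n) := by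
      intro n; simp only [hadef, Function.iterate_succ_apply']
    have halt : ∀ n, a n < μ.ord := by
      intro n
      induction n with
      | zero =>
        show next^[0] (b + 1) < μ.ord
        rw [Function.iterate_zero_apply, Ordinal.add_one_eq_succ]; exact hμlim.succ_lt hb
      | succ n ih => rw [hsucc]; exact hnextlt _ ih
    have hainc : ∀ n, a n < a (n + 1) := fun n => by rw [hsucc]; exact hnextgt _
    have hamono : ∀ m n, m ≤ n → a m ≤ a n := by
      intro m n h
      induction n with
      | zero => obtain rfl := Nat.le_zero.mp h; exact le_rfl
      | succ n ih =>
        rcases Nat.lt_or_ge m (n + 1) with h' | h'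
        · exact (ih (Nat.lt_succ_iff.mp h')).trans (hainc n).le
        · have he : m = n + 1 := le_antisymm h h'
          rw [he]
    refine ⟨⨆ n, a n, ?_, ?_, ?_⟩
    · intro β hβ hβc ξ hξc δ hδ he
      obtain ⟨m, hm⟩ := (Ordinal.lt_iSup_iff).mp hβc
      obtain ⟨k, hk⟩ := (Ordinal.lt_iSup_iff).mp hξc
      have hβn : β < a (max m k) := hm.trans_le (hamono _ _ (le_max_left m k))
      have hξn : ξ < a (max m k) := hk.trans_le (hamono _ _ (le_max_right m k))
      have hδφ : δ = φ β ξ := (hφ β ξ δ hδ he).symm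
      have hlt : δ < a (max m k + 1) := by
        rw [hδφ, hsucc]; exact hnextφ _ β hβn ξ hξn
      exact hlt.trans_le (Ordinal.le_iSup a (max m k + 1))
    · have h0 : b < a 0 := by show b < next^[0] (b + 1); rw [Function.iterate_zero_apply]; exact lt_add_one b
      exact h0.trans_le (Ordinal.le_iSup a 0)
    · exact Cardinal.iSup_lt_ord_lift_of_isRegular hreg (by simpa using hunc) halt
  have clubC₀ : IsClubIn C₀ μ.ord := ⟨fun o _ => c0closed o, c0unb⟩
  -- intersecting a club with a tail
  have club_Ioi : ∀ D : Set Ordinal.{u}, IsClubIn D μ.ord → ∀ b < μ.ord,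
      IsClubIn (D ∩ Set.Ioi b) μ.ord := by
    intro D hD b hb
    constructor
    · intro o ho ⟨hne, hacc⟩
      constructor
      · exact hD.1 o ho ⟨hne, fun b' hb' => by
          obtain ⟨c, hc, h⟩ := hacc b' hb'; exact ⟨c, hc.1, h⟩⟩
      · obtain ⟨c, hc, _, hco⟩ := hacc 0 (pos_iff_ne_zero.mpr hne)
        exact hc.2.trans hco
    · intro b' hb'
      obtain ⟨c, hc, h1, h2⟩ := hD.2 (max b b') (max_lt hb hb')
      exact ⟨c, ⟨hc, (le_max_left b b').trans_lt h1⟩, (le_max_right b b').trans_lt h1, h2⟩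
  have SC₀unb : ∀ b < μ.ord, ∃ c, c ∈ S ∩ C₀ ∧ b < c ∧ c < μ.ord := by
    intro b hb
    obtain ⟨x, hxS, hxD, hxb⟩ := hS.2 _ (club_Ioi C₀ clubC₀ b hb)
    exact ⟨x, ⟨hxS, hxD⟩, hxb, hSsub hxS⟩
  -- the final club
  set C₁ : Set Ordinal.{u} := {α | IsAcc α (S ∩ C₀)} with hC₁def
  set C : Set Ordinal.{u} := C₀ ∩ C₁ with hCdef
  have Cclosed : ∀ o : Ordinal.{u}, IsAcc o C → o ∈ C := by
    intro o ⟨hne, hacc⟩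
    constructor
    · exact c0closed o ⟨hne, fun b hb => by
        obtain ⟨c, hc, h⟩ := hacc b hb; exact ⟨c, hc.1, h⟩⟩
    · refine ⟨hne, fun b hb => ?_⟩
      obtain ⟨c, hc, hbc, hco⟩ := hacc b hb
      obtain ⟨d, hd, hbd, hdc⟩ := hc.2.2 b hbc
      exact ⟨d, hd, hbd, hdc.trans hco⟩
  have Cunb : ∀ b < μ.ord, ∃ c ∈ C, b < c ∧ c < μ.ord := by
    intro b hb
    set P : Ordinal.{u} → Prop := fun x => x ∈ S ∩ C₀ ∧ b < x ∧ x < μ.ord with hPdef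
    have hP0 : ∃ x, P x := SC₀unb b hb
    set F : {x // P x} → {x // P x} := fun x =>
      ⟨(SC₀unb x.1 x.2.2.2).choose, (SC₀unb x.1 x.2.2.2).choose_spec.1,
        x.2.2.1.trans (SC₀unb x.1 x.2.2.2).choose_spec.2.1,
        (SC₀unb x.1 x.2.2.2).choose_spec.2.2⟩ with hFdef
    have hF : ∀ x, x.1 < (F x).1 := fun x => (SC₀unb x.1 x.2.2.2).choose_spec.2.1
    set s : ℕ → {x // P x} := fun n => F^[n] ⟨hP0.choose, hP0.choose_spec⟩ with hsdef
    have hssucc : ∀ n, s (n + 1) = F (s n) := by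
      intro n; simp only [hsdef, Function.iterate_succ_apply']
    have hsinc : ∀ n, (s n).1 < (s (n + 1)).1 := fun n => by rw [hssucc]; exact hF _
    set c : Ordinal.{u} := ⨆ n, (s n).1 with hcdef
    have hcμ : c < μ.ord :=
      Cardinal.iSup_lt_ord_lift_of_isRegular hreg (by simpa using hunc)
        (fun n => (s n).2.2.2)
    have hsc : ∀ n, (s n).1 < c := fun n =>
      (hsinc n).trans_le (Ordinal.le_iSup (fun n => (s n).1) (n + 1))
    have hbc : b < c := (s 0).2.2.1.trans (hsc 0)
    have hcne : c ≠ 0 := pos_iff_ne_zero.mp ((zero_le (a := b)).trans_lt hbc)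
    have haccc : IsAcc c (S ∩ C₀) := by
      refine ⟨hcne, fun b' hb' => ?_⟩
      obtain ⟨n, hn⟩ := (Ordinal.lt_iSup_iff).mp hb'
      exact ⟨(s (n + 1)).1, (s (n + 1)).2.1, hn.trans (hsinc n), hsc (n + 1)⟩
    refine ⟨c, ⟨?_, haccc⟩, hbc, hcμ⟩
    exact c0closed c ⟨hcne, fun b' hb' => by
      obtain ⟨d, hd, h⟩ := haccc.2 b' hb'; exact ⟨d, hd.2, h⟩⟩
  have clubC : IsClubIn C μ.ord := ⟨fun o _ => Cclosed o, Cunb⟩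
  have SCunb : ∀ b < μ.ord, ∃ c, c ∈ S ∩ C ∧ b < c ∧ c < μ.ord := by
    intro b hb
    obtain ⟨x, hxS, hxD, hxb⟩ := hS.2 _ (club_Ioi C clubC b hb)
    exact ⟨x, ⟨hxS, hxD⟩, hxb, hSsub hxS⟩
  -- the interpolating function
  set uf : Ordinal.{u} → Ordinal.{u} := fun α =>
    Ordinal.bsup.{u, u} α (fun β _ => if β ∈ S ∩ C then f β + 1 else 0) with hudef
  have hu_mono : ∀ α α' : Ordinal.{u}, α ≤ α' → uf α ≤ uf α' := by
    intro α α' h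
    exact Ordinal.bsup_le fun β hβ => Ordinal.le_bsup _ β (hβ.trans_le h)
  have hu_ge : ∀ α β, β ∈ S ∩ C → β < α → f β + 1 ≤ uf α := by
    intro α β hβ hβα
    have h' := Ordinal.le_bsup (fun β (_ : β < α) => if β ∈ S ∩ C then f β + 1 else 0) β hβα
    rwa [if_pos hβ] at h'
  have hu_le : ∀ α y, (∀ β ∈ S ∩ C, β < α → f β + 1 ≤ y) → uf α ≤ y := by
    intro α y h
    refine Ordinal.bsup_le fun β hβ => ?_
    split
    · next hβ' => exact h β hβ' hβ
    · exact zero_le (a := y)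
  set g : Ordinal.{u} → Ordinal.{u} := fun α => if α ∈ S ∩ C then f α else uf α + α with hgdef
  have keylem : ∀ α α', α < α' → α' ∈ S ∩ C → g α < f α' := by
    intro α α' h hα'
    by_cases hα : α ∈ S ∩ C
    · simp only [hgdef, if_pos hα]
      exact hmono α hα.1 α' hα'.1 h
    · simp only [hgdef, if_neg hα]
      obtain ⟨β, hβ, hαβ, hβα'⟩ := hα'.2.2.2 α h
      have h1 : uf α ≤ f β := by
        refine hu_le α (f β) fun β' hβ' hβ'α => ?_
        rw [Ordinal.add_one_eq_succ, Order.succ_le_iff]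
        exact hmono β' hβ'.1 β hβ.1 (hβ'α.trans hαβ)
      have h2 : f β + α' ≤ f α' := hT α' hα'.1 hα'.2.1 β hβ.1 hβα'
      calc uf α + α ≤ f β + α := add_le_add_left h1 α
        _ < f β + α' := add_lt_add_right h (f β)
        _ ≤ f α' := h2
  refine ⟨C, clubC, g, ?_, ?_, fun α hα => by simp only [hgdef, if_pos hα]⟩
  · intro α hα
    obtain ⟨α', hα', hlt, _⟩ := SCunb α hα
    exact (keylem α α' hlt hα').trans (hrange α' hα'.1)
  · intro α α' h hα'μ
    by_cases hα' : α' ∈ S ∩ C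
    · have h' := keylem α α' h hα'
      simpa only [hgdef, if_pos hα'] using h'
    · simp only [hgdef, if_neg hα']
      by_cases hα : α ∈ S ∩ C
      · rw [if_pos hα]
        calc f α < f α + 1 := lt_add_one _
          _ ≤ uf α' := hu_ge α' α hα h
          _ ≤ uf α' + α' := le_self_add
      · rw [if_neg hα]
        calc uf α + α < uf α + α' := add_lt_add_right h (uf α)
          _ ≤ uf α' + α' := add_le_add_left (hu_mono α α' h.le) α'

/-- Interpolation: a strictly increasing `f : S → γ` on a stationary `S ⊆ μ`
agrees on `S ∩ C` (for some club `C`) with a strictly increasing total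
function `f* : μ → γ`. -/
theorem stmt7 (μ : Cardinal) (hreg : μ.IsRegular) (hunc : Cardinal.aleph0 < μ)
    (γ : Ordinal) (S : Set Ordinal) (hS : IsStationaryIn S μ.ord)
    (f : Ordinal → Ordinal)
    (hrange : ∀ α ∈ S, f α < γ)
    (hmono : ∀ α ∈ S, ∀ β ∈ S, α < β → f α < f β) :
    ∃ C : Set Ordinal, IsClubIn C μ.ord ∧
      ∃ g : Ordinal → Ordinal,
        (∀ α < μ.ord, g α < γ) ∧
        (∀ α β : Ordinal, α < β → β < μ.ord → g α < g β) ∧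
        ∀ α ∈ S ∩ C, g α = f α := by
  classical
  set L1 : Ordinal.{u_1} → Ordinal.{max u_1 u_2} := Ordinal.lift.{u_2, u_1} with hL1
  set L2 : Ordinal.{u_2} → Ordinal.{max u_1 u_2} := Ordinal.lift.{u_1, u_2} with hL2
  have hord : (Cardinal.lift.{u_2, u_1} μ).ord = L1 μ.ord := (Cardinal.lift_ord μ).symm
  -- pullback of clubs
  have hpull : ∀ C' : Set Ordinal.{max u_1 u_2}, IsClubIn C' (L1 μ.ord) →
      IsClubIn (L1 ⁻¹' C') μ.ord := by
    intro C' hC'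
    constructor
    · intro o ho ⟨hne, hacc⟩
      have hacc' : IsAcc (L1 o) C' := by
        refine ⟨fun h0 => hne (Ordinal.lift_inj.mp (h0.trans Ordinal.lift_zero.symm)), fun b hb => ?_⟩
        obtain ⟨b', hb', rfl⟩ := Ordinal.lt_lift_iff.mp hb
        obtain ⟨c, hc, hbc, hco⟩ := hacc b' hb'
        exact ⟨L1 c, hc, Ordinal.lift_lt.mpr hbc, Ordinal.lift_lt.mpr hco⟩
      exact hC'.1 (L1 o) (Ordinal.lift_lt.mpr ho) hacc'
    · intro b hb
      obtain ⟨c, hc, hbc, hcμ⟩ := hC'.2 (L1 b) (Ordinal.lift_lt.mpr hb)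
      obtain ⟨c', hc', rfl⟩ := Ordinal.lt_lift_iff.mp hcμ
      exact ⟨c', hc, Ordinal.lift_lt.mp hbc, hc'⟩
  -- lifted data
  set S' : Set Ordinal.{max u_1 u_2} := L1 '' S with hS'def
  set f' : Ordinal.{max u_1 u_2} → Ordinal.{max u_1 u_2} := fun x =>
    if h : ∃ a ∈ S, L1 a = x then L2 (f h.choose) else 0 with hf'def
  have hf' : ∀ a ∈ S, f' (L1 a) = L2 (f a) := by
    intro a ha
    have hex : ∃ b ∈ S, L1 b = L1 a := ⟨a, ha, rfl⟩
    simp only [hf'def, dif_pos hex]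
    congr 1
    congr 1
    exact Ordinal.lift_inj.mp hex.choose_spec.2
  have hreg' : (Cardinal.lift.{u_2, u_1} μ).IsRegular := by
    constructor
    · rw [← Cardinal.lift_aleph0.{u_2, u_1}]
      exact Cardinal.lift_le.mpr hreg.1
    · rw [← Cardinal.lift_ord, ← Ordinal.lift_cof]
      exact Cardinal.lift_le.mpr hreg.2
  have hunc' : Cardinal.aleph0 < Cardinal.lift.{u_2, u_1} μ := by
    rw [← Cardinal.lift_aleph0.{u_2, u_1}]
    exact Cardinal.lift_lt.mpr hunc
  have hS' : IsStationaryIn S' (Cardinal.lift.{u_2, u_1} μ).ord := by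
    rw [hord]
    constructor
    · rintro x ⟨a, ha, rfl⟩
      exact Ordinal.lift_lt.mpr (hS.1 ha)
    · intro C' hC'
      obtain ⟨x, hxS, hxC⟩ := hS.2 _ (hpull C' hC')
      exact ⟨L1 x, ⟨x, hxS, rfl⟩, hxC⟩
  have hrange' : ∀ x ∈ S', f' x < L2 γ := by
    rintro x ⟨a, ha, rfl⟩
    rw [hf' a ha]
    exact Ordinal.lift_lt.mpr (hrange a ha)
  have hmono' : ∀ x ∈ S', ∀ y ∈ S', x < y → f' x < f' y := by
    rintro x ⟨a, ha, rfl⟩ y ⟨b, hb, rfl⟩ h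
    rw [hf' a ha, hf' b hb]
    exact Ordinal.lift_lt.mpr (hmono a ha b hb (Ordinal.lift_lt.mp h))
  obtain ⟨C', hC', g', hr', hm', ha'⟩ :=
    stmt7core (Cardinal.lift.{u_2, u_1} μ) hreg' hunc' (L2 γ) S' hS' f' hrange' hmono'
  rw [hord] at hC' hr' hm'
  -- transfer back
  have hgex : ∀ α < μ.ord, ∃ y, L2 y = g' (L1 α) := by
    intro α hα
    exact Ordinal.mem_range_lift_of_le (hr' (L1 α) (Ordinal.lift_lt.mpr hα)).le
  set g : Ordinal.{u_1} → Ordinal.{u_2} := fun α =>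
    if h : ∃ y, L2 y = g' (L1 α) then h.choose else 0 with hgdef
  have hg : ∀ α < μ.ord, L2 (g α) = g' (L1 α) := by
    intro α hα
    have hex := hgex α hα
    simp only [hgdef, dif_pos hex]
    exact hex.choose_spec
  refine ⟨L1 ⁻¹' C', hpull C' hC', g, ?_, ?_, ?_⟩
  · intro α hα
    have h' := hr' (L1 α) (Ordinal.lift_lt.mpr hα)
    rw [← hg α hα] at h'
    exact Ordinal.lift_lt.mp h'
  · intro α β h hβ
    have hα : α < μ.ord := h.trans hβ
    have h' := hm' (L1 α) (L1 β) (Ordinal.lift_lt.mpr h) (Ordinal.lift_lt.mpr hβ)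
    rw [← hg α hα, ← hg β hβ] at h'
    exact Ordinal.lift_lt.mp h'
  · intro α ⟨hαS, hαC⟩
    have hαμ : α < μ.ord := hS.1 hαS
    have h1 : g' (L1 α) = f' (L1 α) := ha' (L1 α) ⟨⟨α, hαS, rfl⟩, hαC⟩
    have h2 := hg α hαμ
    rw [h1, hf' α hαS] at h2
    exact Ordinal.lift_inj.mp h2
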